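/- Let p be an odd prime, k := (p−1)/2, and t ≥ 1 an integer. Then the determinant of the k × k matrix whose (j,v) entry, for 1 ≤ j,v ≤ k, is p^{2jp^t}(B_{2jp^t}(v/p) − B_{2jp^t}), is a nonzero rational number with p-adic valuation equal to 0. -/

import Mathlib

open Finset

variable {p : ℕ}

lemma padicValNat_le_sub_one (hp : 1 < p) {b : ℕ} (hb : b ≠ 0) :
    padicValNat p b ≤ b - 1 := by
  have h1 : p ^ padicValNat p b ∣ b := pow_padicValNat_dvd
  have h2 : p ^ padicValNat p b ≤ b := Nat.le_of_dvd (Nat.pos_of_ne_zero hb) h1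
  have h3 : padicValNat p b < p ^ padicValNat p b := Nat.lt_pow_self hp
  omega

lemma padicNorm_natCast (hp : Fact p.Prime) (b : ℕ) (hb : b ≠ 0) :
    padicNorm p (b : ℚ) = (p : ℚ) ^ (-(padicValNat p b : ℤ)) := by
  rw [padicNorm.eq_zpow_of_nonzero (by exact_mod_cast hb)]
  congr 1
  rw [← padicValRat.of_nat]

lemma padicNorm_pow_div_le_one (hp : Fact p.Prime) {a b : ℕ} (hb : b ≠ 0)
    (h : padicValNat p b ≤ a) : padicNorm p ((p : ℚ) ^ a / (b : ℚ)) ≤ 1 := by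
  have hp1 : (1 : ℚ) < p := by exact_mod_cast hp.out.one_lt
  have hpn : padicNorm p ((p : ℚ) ^ a) = (p : ℚ) ^ (-(a : ℤ)) := by
    have : ((p : ℚ) ^ a) = ((p ^ a : ℕ) : ℚ) := by push_cast; ring
    rw [this, padicNorm_natCast hp _ (pow_ne_zero a hp.out.ne_zero),
      padicValNat.prime_pow a]
  rw [padicNorm.div, hpn, padicNorm_natCast hp b hb, ← zpow_sub₀ (by positivity)]
  calc (p:ℚ) ^ (-(a:ℤ) - -(padicValNat p b : ℤ)) ≤ (p:ℚ) ^ (0:ℤ) := by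
        apply zpow_le_zpow_right₀ (le_of_lt hp1); omega
    _ = 1 := zpow_zero _

lemma padicNorm_prod_le_one (hp : Fact p.Prime) {α : Type*} {s : Finset α} {f : α → ℚ}
    (h : ∀ i ∈ s, padicNorm p (f i) ≤ 1) : padicNorm p (∏ i ∈ s, f i) ≤ 1 := by
  refine Finset.prod_induction f (fun x => padicNorm p x ≤ 1) ?_ (by simp [padicNorm.one]) h
  intro a b ha hb
  rw [padicNorm.mul]
  calc padicNorm p a * padicNorm p b ≤ 1 * 1 :=
        mul_le_mul ha hb (padicNorm.nonneg _) zero_le_one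
    _ = 1 := one_mul 1

lemma padicNorm_prod_sub_prod_le (hp : Fact p.Prime) {α : Type*} {ε : ℚ} (hε : 0 ≤ ε)
    (hε1 : ε ≤ 1) : ∀ (s : Finset α) (f g : α → ℚ),
    (∀ i ∈ s, padicNorm p (f i) ≤ 1) → (∀ i ∈ s, padicNorm p (g i) ≤ 1) →
    (∀ i ∈ s, padicNorm p (f i - g i) ≤ ε) →
    padicNorm p ((∏ i ∈ s, f i) - ∏ i ∈ s, g i) ≤ ε := by
  classical
  intro s
  induction s using Finset.induction_on with
  | empty => intro f g _ _ _; simp [padicNorm.zero, hε]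
  | insert a s hx ih =>
    intro f g hf hg hfg
    rw [Finset.prod_insert hx, Finset.prod_insert hx]
    have key : f a * ∏ i ∈ s, f i - g a * ∏ i ∈ s, g i =
        (f a - g a) * ∏ i ∈ s, f i + g a * ((∏ i ∈ s, f i) - ∏ i ∈ s, g i) := by ring
    rw [key]
    refine le_trans padicNorm.nonarchimedean (max_le ?_ ?_)
    · rw [padicNorm.mul]
      calc padicNorm p (f a - g a) * padicNorm p (∏ i ∈ s, f i) ≤ ε * 1 :=
            mul_le_mul (hfg a (Finset.mem_insert_self a s))
              (padicNorm_prod_le_one hp fun i hi => hf i (Finset.mem_insert_of_mem hi))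
              (padicNorm.nonneg _) hε
        _ = ε := mul_one ε
    · rw [padicNorm.mul]
      calc padicNorm p (g a) * padicNorm p ((∏ i ∈ s, f i) - ∏ i ∈ s, g i) ≤ 1 * ε :=
            mul_le_mul (hg a (Finset.mem_insert_self a s))
              (ih _ _ (fun i hi => hf i (Finset.mem_insert_of_mem hi))
                (fun i hi => hg i (Finset.mem_insert_of_mem hi))
                (fun i hi => hfg i (Finset.mem_insert_of_mem hi)))
              (padicNorm.nonneg _) zero_le_one
        _ = ε := one_mul ε

lemma p_mul_bernoulli_norm_le (hp : Fact p.Prime) : ∀ n : ℕ,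
    padicNorm p ((p : ℚ) * _root_.bernoulli n) ≤ 1 := by
  intro n
  induction n using Nat.strong_induction_on with
  | _ n IH =>
  have hN1 : ((n : ℚ) + 1) ≠ 0 := by positivity
  have hs := sum_range_pow p n
  rw [Finset.sum_range_succ] at hs
  have hlast : _root_.bernoulli n * ((n+1).choose n : ℚ) * (p:ℚ) ^ (n + 1 - n) / ((n:ℚ)+1)
      = (p : ℚ) * _root_.bernoulli n := by
    rw [Nat.choose_succ_self_right, Nat.add_sub_cancel_left, pow_one]
    push_cast
    field_simp
  rw [hlast] at hs
  have hmain : (p : ℚ) * _root_.bernoulli n = (∑ k ∈ range p, (k:ℚ) ^ n) -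
      ∑ i ∈ range n, _root_.bernoulli i * ((n+1).choose i : ℚ) * (p:ℚ) ^ (n + 1 - i) / ((n:ℚ)+1) := by
    rw [hs]; push_cast; ring
  rw [hmain]
  refine le_trans padicNorm.sub (max_le ?_ ?_)
  · refine padicNorm.sum_le' (fun k _ => ?_) zero_le_one
    have : ((k:ℚ))^n = ((k^n : ℕ) : ℚ) := by push_cast; ring
    rw [this]; exact padicNorm.of_nat _
  · refine padicNorm.sum_le' (fun i hi => ?_) zero_le_one
    rw [Finset.mem_range] at hi
    have him : i ≤ n := le_of_lt hi
    have hm0 : (n + 1 - i : ℕ) ≠ 0 := by omega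
    have hmQ : ((n + 1 - i : ℕ) : ℚ) ≠ 0 := by exact_mod_cast hm0
    have hkey : ((n.choose i : ℕ) : ℚ) * ((n:ℚ) + 1) = (((n+1).choose i : ℕ) : ℚ) * ((n + 1 - i : ℕ) : ℚ) := by
      have := Nat.choose_mul_succ_eq n i
      exact_mod_cast congrArg (Nat.cast : ℕ → ℚ) this
    have hterm : _root_.bernoulli i * ((n+1).choose i : ℚ) * (p:ℚ) ^ (n + 1 - i) / ((n:ℚ)+1)
        = ((p:ℚ) * _root_.bernoulli i) * ((n.choose i : ℕ) : ℚ) * ((p:ℚ) ^ (n - i) / ((n + 1 - i : ℕ) : ℚ)) := by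
      have hpow : (p:ℚ) ^ (n + 1 - i) = (p:ℚ) ^ (n - i) * p := by
        rw [← pow_succ]; congr 1; omega
      rw [hpow]
      field_simp
      linear_combination (-(_root_.bernoulli i * (p:ℚ) ^ (n - i) * p)) * hkey
    rw [hterm, padicNorm.mul, padicNorm.mul]
    have h1 : padicNorm p ((p:ℚ) * _root_.bernoulli i) ≤ 1 := IH i hi
    have h2 : padicNorm p ((n.choose i : ℕ) : ℚ) ≤ 1 := padicNorm.of_nat _
    have h3 : padicNorm p ((p:ℚ) ^ (n - i) / ((n + 1 - i : ℕ) : ℚ)) ≤ 1 := by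
      apply padicNorm_pow_div_le_one hp hm0
      have := padicValNat_le_sub_one hp.out.one_lt hm0
      omega
    calc padicNorm p ((p:ℚ) * _root_.bernoulli i) * padicNorm p ((n.choose i : ℕ) : ℚ) *
          padicNorm p ((p:ℚ) ^ (n - i) / ((n + 1 - i : ℕ) : ℚ)) ≤ 1 * 1 * 1 := by
          gcongr <;> first | exact padicNorm.nonneg _ | assumption
      _ = 1 := by norm_num

lemma bernoulli_entry_expand (hp : Fact p.Prime) {n : ℕ} (hn : 1 ≤ n) (w : ℕ) :
    (p:ℚ) ^ n * ((Polynomial.bernoulli n).eval ((w : ℚ) / (p : ℚ)) - _root_.bernoulli n)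
      = (w:ℚ) ^ n + ∑ i ∈ Finset.Ico 1 n,
          _root_.bernoulli i * (n.choose i : ℚ) * (w:ℚ) ^ (n - i) * (p:ℚ) ^ i := by
  have hp0 : (p : ℚ) ≠ 0 := by exact_mod_cast hp.out.ne_zero
  have heval : (Polynomial.bernoulli n).eval ((w : ℚ) / (p : ℚ))
      = ∑ i ∈ range (n+1), _root_.bernoulli i * (n.choose i : ℚ) * ((w:ℚ)/(p:ℚ)) ^ (n - i) := by
    simp [Polynomial.bernoulli, Polynomial.eval_finset_sum]
  have hterm : ∀ i ∈ range (n+1),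
      (p:ℚ) ^ n * (_root_.bernoulli i * (n.choose i : ℚ) * ((w:ℚ)/(p:ℚ)) ^ (n - i))
      = _root_.bernoulli i * (n.choose i : ℚ) * (w:ℚ) ^ (n - i) * (p:ℚ) ^ i := by
    intro i hi
    rw [Finset.mem_range] at hi
    have hpow : (p:ℚ) ^ n = (p:ℚ) ^ (n - i) * (p:ℚ) ^ i := by
      rw [← pow_add]; congr 1; omega
    rw [div_pow, hpow]
    field_simp
  have hlastterm : _root_.bernoulli n * (n.choose n : ℚ) * (w:ℚ) ^ (n - n) * (p:ℚ) ^ n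
      = (p:ℚ) ^ n * _root_.bernoulli n := by
    simp [Nat.choose_self]; ring
  rw [heval, mul_sub, Finset.mul_sum, Finset.sum_congr rfl hterm, Finset.sum_range_succ,
    hlastterm, Finset.range_eq_Ico, Finset.sum_eq_sum_Ico_succ_bot (by omega : 0 < n)]
  simp [Nat.choose_zero_right]

lemma padicNorm_two_eq_one (hp : Fact p.Prime) (hodd : Odd p) : padicNorm p (2 : ℚ) = 1 := by
  have : ((2:ℕ):ℚ) = (2:ℚ) := by norm_num
  rw [← this, padicNorm.nat_eq_one_iff]
  intro h
  have := (Nat.prime_dvd_prime_iff_eq hp.out Nat.prime_two).mp h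
  rw [this] at hodd
  exact (Nat.not_odd_iff_even.mpr even_two) hodd

lemma bernoulli_term_norm_le (hp : Fact p.Prime) (hodd : Odd p) {n i : ℕ}
    (h1 : 1 ≤ i) (h2 : i < n) (w : ℕ) :
    padicNorm p (_root_.bernoulli i * (n.choose i : ℚ) * (w:ℚ) ^ (n - i) * (p:ℚ) ^ i)
      ≤ (p:ℚ)⁻¹ := by
  have hp1 : (1:ℚ) < p := by exact_mod_cast hp.out.one_lt
  have hinv0 : (0:ℚ) ≤ (p:ℚ)⁻¹ := by positivity
  have hwpow : padicNorm p ((w:ℚ) ^ (n - i)) ≤ 1 := by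
    have : ((w:ℚ)) ^ (n-i) = ((w ^ (n-i) : ℕ) : ℚ) := by push_cast; ring
    rw [this]; exact padicNorm.of_nat _
  have hchoose : padicNorm p ((n.choose i : ℚ)) ≤ 1 := padicNorm.of_nat _
  have hppow : ∀ m : ℕ, padicNorm p ((p:ℚ) ^ m) = (p:ℚ) ^ (-(m:ℤ)) := by
    intro m
    have : ((p:ℚ)) ^ m = ((p ^ m : ℕ) : ℚ) := by push_cast; ring
    rw [this, padicNorm_natCast hp _ (pow_ne_zero m hp.out.ne_zero), padicValNat.prime_pow m]
  have hpinv : padicNorm p ((p:ℚ)) = (p:ℚ)⁻¹ := padicNorm.padicNorm_p hp.out.one_lt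
  rcases eq_or_lt_of_le h1 with rfl | h1'
  · -- i = 1
    rw [padicNorm.mul, pow_one, hpinv]
    have hb1 : padicNorm p (_root_.bernoulli 1 * ((n.choose 1 : ℕ) : ℚ) * (w:ℚ) ^ (n-1)) ≤ 1 := by
      rw [padicNorm.mul, padicNorm.mul, bernoulli_one]
      have hhalf : padicNorm p ((-1:ℚ)/2) = 1 := by
        rw [padicNorm.div, padicNorm.neg, padicNorm.one, padicNorm_two_eq_one hp hodd]
        norm_num
      calc padicNorm p ((-1:ℚ)/2) * padicNorm p ((n.choose 1 : ℕ):ℚ) * padicNorm p ((w:ℚ)^(n-1))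
          ≤ 1 * 1 * 1 := by rw [hhalf]; gcongr <;> exact padicNorm.nonneg _
        _ = 1 := by norm_num
    calc padicNorm p (_root_.bernoulli 1 * ((n.choose 1:ℕ):ℚ) * (w:ℚ)^(n-1)) * (p:ℚ)⁻¹
        ≤ 1 * (p:ℚ)⁻¹ := by gcongr
      _ = (p:ℚ)⁻¹ := one_mul _
  · -- 2 ≤ i
    have hre : _root_.bernoulli i * (n.choose i : ℚ) * (w:ℚ) ^ (n - i) * (p:ℚ) ^ i
        = ((p:ℚ) * _root_.bernoulli i) * ((n.choose i : ℚ) * (w:ℚ) ^ (n - i) * (p:ℚ) ^ (i-1)) := by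
      have hpi : (p:ℚ) ^ i = (p:ℚ) * (p:ℚ) ^ (i-1) := by
        rw [← pow_succ']; congr 1; omega
      rw [hpi]; ring
    rw [hre, padicNorm.mul]
    have hb := p_mul_bernoulli_norm_le hp i
    have hsecond : padicNorm p ((n.choose i : ℚ) * (w:ℚ) ^ (n - i) * (p:ℚ) ^ (i-1)) ≤ (p:ℚ)⁻¹ := by
      rw [padicNorm.mul, padicNorm.mul]
      have hlast : padicNorm p ((p:ℚ) ^ (i-1)) ≤ (p:ℚ)⁻¹ := by
        rw [hppow]
        calc (p:ℚ) ^ (-((i-1 : ℕ):ℤ)) ≤ (p:ℚ) ^ (-1 : ℤ) := by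
              apply zpow_le_zpow_right₀ (le_of_lt hp1); omega
          _ = (p:ℚ)⁻¹ := by simp
      calc padicNorm p ((n.choose i:ℚ)) * padicNorm p ((w:ℚ)^(n-i)) * padicNorm p ((p:ℚ)^(i-1))
          ≤ 1 * 1 * (p:ℚ)⁻¹ := by gcongr <;> exact padicNorm.nonneg _
        _ = (p:ℚ)⁻¹ := by ring
    calc padicNorm p ((p:ℚ) * _root_.bernoulli i) *
          padicNorm p ((n.choose i : ℚ) * (w:ℚ) ^ (n - i) * (p:ℚ) ^ (i-1))
        ≤ 1 * (p:ℚ)⁻¹ := by gcongr; exact padicNorm.nonneg _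
      _ = (p:ℚ)⁻¹ := one_mul _

lemma fermat_pow_zmod (hp : Fact p.Prime) (a m t : ℕ) :
    ((a : ZMod p) ^ m) ^ p ^ t = (a : ZMod p) ^ m := by
  induction t with
  | zero => simp
  | succ t ih => rw [pow_succ, pow_mul, ih, ZMod.pow_card]

lemma fermat_dvd (hp : Fact p.Prime) (a m t : ℕ) :
    (p : ℤ) ∣ ((a ^ (m * p ^ t) : ℕ) : ℤ) - ((a ^ m : ℕ) : ℤ) := by
  rw [← ZMod.intCast_zmod_eq_zero_iff_dvd]
  push_cast
  rw [pow_mul, fermat_pow_zmod hp a m t, sub_self]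

lemma det_intmat_not_dvd (hp : Fact p.Prime) (hodd : Odd p) :
    ¬ (p : ℤ) ∣ Matrix.det (Matrix.of fun j v : Fin ((p-1)/2) =>
      (((v.val + 1) ^ (2 * (j.val + 1)) : ℕ) : ℤ)) := by
  intro hdvd
  obtain ⟨c, hc⟩ := hodd
  have hp3 : 3 ≤ p := by
    have h2 := hp.out.two_le
    omega
  set k := (p - 1) / 2 with hk
  have hk2 : 2 * k = p - 1 := by omega
  set x : Fin k → ZMod p := fun v => ((v.val + 1 : ℕ) : ZMod p) ^ 2 with hx
  have hzero : ((Matrix.det (Matrix.of fun j v : Fin k =>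
      (((v.val + 1) ^ (2 * (j.val + 1)) : ℕ) : ℤ)) : ℤ) : ZMod p) = 0 :=
    (ZMod.intCast_zmod_eq_zero_iff_dvd _ p).mpr hdvd
  have hmapdet : (((Matrix.of fun j v : Fin k => (((v.val + 1) ^ (2 * (j.val + 1)) : ℕ) : ℤ)).map
      (Int.cast : ℤ → ZMod p)).det : ZMod p)
      = ((Matrix.det (Matrix.of fun j v : Fin k =>
          (((v.val + 1) ^ (2 * (j.val + 1)) : ℕ) : ℤ)) : ℤ) : ZMod p) :=
    (RingHom.map_det (Int.castRingHom (ZMod p)) _).symm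
  have hBeq : ((Matrix.of fun j v : Fin k => (((v.val + 1) ^ (2 * (j.val + 1)) : ℕ) : ℤ)).map
      (Int.cast : ℤ → ZMod p))
      = Matrix.of fun j v : Fin k => x v * Matrix.transpose (Matrix.vandermonde x) j v := by
    ext j v
    simp only [Matrix.map_apply, Matrix.of_apply, Matrix.transpose_apply,
      Matrix.vandermonde, hx]
    push_cast
    rw [pow_mul, ← pow_succ']
  have hdetB : ((Matrix.of fun j v : Fin k => (((v.val + 1) ^ (2 * (j.val + 1)) : ℕ) : ℤ)).map
      (Int.cast : ℤ → ZMod p)).det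
      = (∏ v : Fin k, x v) * ∏ i : Fin k, ∏ j ∈ Finset.Ioi i, (x j - x i) := by
    rw [hBeq, Matrix.det_mul_row, Matrix.det_transpose, Matrix.det_vandermonde]
  have hprodzero : (∏ v : Fin k, x v) * (∏ i : Fin k, ∏ j ∈ Finset.Ioi i, (x j - x i)) = 0 := by
    rw [← hdetB, hmapdet, hzero]
  have hxne : ∀ v : Fin k, x v ≠ 0 := by
    intro v
    simp only [hx]
    apply pow_ne_zero
    rw [Ne, ZMod.natCast_eq_zero_iff]
    intro hdv
    have h1 : p ≤ v.val + 1 := Nat.le_of_dvd (by omega) hdv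
    have h2 : v.val < k := v.isLt
    omega
  have hdistinct : ∀ i j : Fin k, i < j → x j - x i ≠ 0 := by
    intro i j hij hsub
    have hxx : x j = x i := by
      have := sub_eq_zero.mp hsub; exact this
    have hdvd2 : (p : ℤ) ∣ ((j.val + 1 : ℕ) : ℤ) ^ 2 - ((i.val + 1 : ℕ) : ℤ) ^ 2 := by
      rw [← ZMod.intCast_zmod_eq_zero_iff_dvd]
      push_cast
      simp only [hx] at hxx
      push_cast at hxx
      rw [hxx, sub_self]
    have hfact : ((j.val + 1 : ℕ) : ℤ) ^ 2 - ((i.val + 1 : ℕ) : ℤ) ^ 2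
        = ((j.val : ℤ) - (i.val : ℤ)) * ((j.val : ℤ) + (i.val : ℤ) + 2) := by push_cast; ring
    rw [hfact] at hdvd2
    have hpZ : Prime (p : ℤ) := Nat.prime_iff_prime_int.mp hp.out
    have hlt : i.val < j.val := hij
    have hjk : j.val < k := j.isLt
    have hik : i.val < k := i.isLt
    rcases hpZ.dvd_mul.mp hdvd2 with h | h
    · have := Int.le_of_dvd (by omega) h
      omega
    · have := Int.le_of_dvd (by omega) h
      omega
  rcases mul_eq_zero.mp hprodzero with h | h
  · obtain ⟨v, _, hv⟩ := Finset.prod_eq_zero_iff.mp h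
    exact hxne v hv
  · obtain ⟨i, _, hi⟩ := Finset.prod_eq_zero_iff.mp h
    obtain ⟨j, hj, hij⟩ := Finset.prod_eq_zero_iff.mp hi
    exact hdistinct i j (Finset.mem_Ioi.mp hj) hij

lemma padicNorm_det_sub_det (hp : Fact p.Prime) {k : ℕ} {ε : ℚ} (hε : 0 ≤ ε) (hε1 : ε ≤ 1)
    (M A : Matrix (Fin k) (Fin k) ℚ)
    (hM : ∀ i j, padicNorm p (M i j) ≤ 1) (hA : ∀ i j, padicNorm p (A i j) ≤ 1)
    (hMA : ∀ i j, padicNorm p (M i j - A i j) ≤ ε) :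
    padicNorm p (M.det - A.det) ≤ ε := by
  rw [Matrix.det_apply, Matrix.det_apply, ← Finset.sum_sub_distrib]
  refine padicNorm.sum_le' (fun σ _ => ?_) hε
  have hσ : Equiv.Perm.sign σ • (∏ i, M (σ i) i) - Equiv.Perm.sign σ • (∏ i, A (σ i) i)
      = ((Equiv.Perm.sign σ : ℤ) : ℚ) * ((∏ i, M (σ i) i) - ∏ i, A (σ i) i) := by
    rcases Int.units_eq_one_or (Equiv.Perm.sign σ) with h | h <;> simp [h] <;> ring
  rw [hσ, padicNorm.mul]
  have hs : padicNorm p ((Equiv.Perm.sign σ : ℤ) : ℚ) = 1 := by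
    rcases Int.units_eq_one_or (Equiv.Perm.sign σ) with h | h <;>
      simp [h, padicNorm.one, padicNorm.neg]
  rw [hs, one_mul]
  exact padicNorm_prod_sub_prod_le hp hε hε1 Finset.univ _ _
    (fun i _ => hM _ _) (fun i _ => hA _ _) (fun i _ => hMA _ _)

/-- Let `p` be an odd prime, `k = (p−1)/2`, `t ≥ 1`. The determinant of the `k × k` matrix
with (1-indexed) `(j,v)` entry `p^{2jp^t}(B_{2jp^t}(v/p) − B_{2jp^t})` is a nonzero rational
number with `p`-adic valuation `0`. -/
theorem det_even_bernoulli_padic (p t : ℕ) (hp : p.Prime) (hodd : Odd p) (ht : 1 ≤ t) :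
    Matrix.det (Matrix.of fun j v : Fin ((p - 1) / 2) =>
      (p : ℚ) ^ (2 * (j.val + 1) * p ^ t) *
        ((Polynomial.bernoulli (2 * (j.val + 1) * p ^ t)).eval
            (((v.val + 1 : ℕ) : ℚ) / (p : ℚ)) -
          bernoulli (2 * (j.val + 1) * p ^ t))) ≠ 0 ∧
    padicValRat p
      (Matrix.det (Matrix.of fun j v : Fin ((p - 1) / 2) =>
        (p : ℚ) ^ (2 * (j.val + 1) * p ^ t) *
          ((Polynomial.bernoulli (2 * (j.val + 1) * p ^ t)).eval
              (((v.val + 1 : ℕ) : ℚ) / (p : ℚ)) -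
            bernoulli (2 * (j.val + 1) * p ^ t)))) = 0 := by
  haveI hpf : Fact p.Prime := ⟨hp⟩
  have hp1 : (1:ℚ) < p := by exact_mod_cast hp.one_lt
  have hp0 : (0:ℚ) < p := by positivity
  have hpinv1 : (p:ℚ)⁻¹ < 1 := by
    rw [inv_lt_one_iff₀]; right; exact hp1
  have hpinv0 : (0:ℚ) ≤ (p:ℚ)⁻¹ := by positivity
  set k := (p - 1) / 2 with hk
  set M : Matrix (Fin k) (Fin k) ℚ := Matrix.of fun j v : Fin k =>
      (p : ℚ) ^ (2 * (j.val + 1) * p ^ t) *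
        ((Polynomial.bernoulli (2 * (j.val + 1) * p ^ t)).eval
            (((v.val + 1 : ℕ) : ℚ) / (p : ℚ)) -
          bernoulli (2 * (j.val + 1) * p ^ t)) with hM
  set A : Matrix (Fin k) (Fin k) ℚ := Matrix.of fun j v : Fin k =>
      (((v.val + 1) ^ (2 * (j.val + 1)) : ℕ) : ℚ) with hA
  have hAn : ∀ j v : Fin k, padicNorm p (A j v) ≤ 1 := fun j v => padicNorm.of_nat _
  have hclose : ∀ j v : Fin k, padicNorm p (M j v - A j v) ≤ (p:ℚ)⁻¹ := by
    intro j v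
    set n := 2 * (j.val + 1) * p ^ t with hn
    set w := v.val + 1 with hw
    have hn1 : 1 ≤ n := by
      have hpt : 0 < p ^ t := pow_pos hp.pos t
      have : 0 < n := by positivity
      omega
    have hexp := bernoulli_entry_expand hpf hn1 w
    have hMjv : M j v = (w:ℚ) ^ n + ∑ i ∈ Finset.Ico 1 n,
        _root_.bernoulli i * (n.choose i : ℚ) * (w:ℚ) ^ (n - i) * (p:ℚ) ^ i := hexp
    have hsplit : M j v - A j v = (∑ i ∈ Finset.Ico 1 n,
        _root_.bernoulli i * (n.choose i : ℚ) * (w:ℚ) ^ (n - i) * (p:ℚ) ^ i)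
        + (((w ^ n : ℕ) : ℚ) - ((w ^ (2 * (j.val + 1)) : ℕ) : ℚ)) := by
      rw [hMjv]
      simp only [hA, Matrix.of_apply]
      simp only [hw]
      push_cast
      ring
    rw [hsplit]
    refine le_trans padicNorm.nonarchimedean (max_le ?_ ?_)
    · exact padicNorm.sum_le' (fun i hi => by
        rw [Finset.mem_Ico] at hi
        exact bernoulli_term_norm_le hpf hodd hi.1 hi.2 w) hpinv0
    · have hz : ((w ^ n : ℕ) : ℚ) - ((w ^ (2 * (j.val + 1)) : ℕ) : ℚ)
          = ((((w ^ n : ℕ) : ℤ) - ((w ^ (2 * (j.val + 1)) : ℕ) : ℤ) : ℤ) : ℚ) := by push_cast; ring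
      rw [hz]
      have hdvd := fermat_dvd hpf w (2 * (j.val + 1)) t
      have := (padicNorm.dvd_iff_norm_le (p := p)
        (n := 1) (z := ((w ^ n : ℕ) : ℤ) - ((w ^ (2 * (j.val + 1)) : ℕ) : ℤ))).mp (by
          rw [pow_one]; exact hdvd)
      calc padicNorm p ((((w ^ n : ℕ) : ℤ) - ((w ^ (2 * (j.val + 1)) : ℕ) : ℤ) : ℤ) : ℚ)
          ≤ (p:ℚ) ^ (-(1:ℕ) : ℤ) := this
        _ = (p:ℚ)⁻¹ := by simp
  have hMn : ∀ j v : Fin k, padicNorm p (M j v) ≤ 1 := by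
    intro j v
    have : M j v = A j v + (M j v - A j v) := by ring
    rw [this]
    refine le_trans padicNorm.nonarchimedean (max_le (hAn j v) ?_)
    exact le_trans (hclose j v) (le_of_lt hpinv1)
  have hdetA : padicNorm p A.det = 1 := by
    have hAint : A = (Matrix.of fun j v : Fin k =>
        (((v.val + 1) ^ (2 * (j.val + 1)) : ℕ) : ℤ)).map ⇑(Int.castRingHom ℚ) := by
      ext j v; simp [hA]
    rw [hAint, ← RingHom.mapMatrix_apply (Int.castRingHom ℚ), ← RingHom.map_det (Int.castRingHom ℚ)]
    exact (padicNorm.int_eq_one_iff _).mpr (det_intmat_not_dvd hpf hodd)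
  have hdetclose : padicNorm p (M.det - A.det) ≤ (p:ℚ)⁻¹ :=
    padicNorm_det_sub_det hpf hpinv0 (le_of_lt hpinv1) M A hMn hAn hclose
  have hnorm : padicNorm p M.det = 1 := by
    have hre : M.det = A.det + (M.det - A.det) := by ring
    rcases eq_or_ne (M.det - A.det) 0 with h0 | h0
    · rw [hre, h0, add_zero, hdetA]
    · rw [hre, padicNorm.add_eq_max_of_ne (by
        rw [hdetA]
        intro hcontra
        have := lt_of_le_of_lt hdetclose hpinv1
        rw [← hcontra] at this
        exact lt_irrefl _ this), hdetA]
      rw [max_eq_left (le_trans hdetclose (le_of_lt hpinv1))]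
  have hdet0 : M.det ≠ 0 := by
    intro h0
    rw [h0, padicNorm.zero] at hnorm
    norm_num at hnorm
  refine ⟨hdet0, ?_⟩
  have hv := padicNorm.eq_zpow_of_nonzero (p := p) hdet0
  rw [hnorm] at hv
  have : (p:ℚ) ^ (0:ℤ) = (p:ℚ) ^ (-padicValRat p M.det) := by
    rw [zpow_zero]; exact hv
  have := zpow_right_injective₀ hp0 (by exact_mod_cast hp.one_lt.ne' : (p:ℚ) ≠ 1) this
  omega
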